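/- Let L be a finite nonempty set of integers all at least 2, and let f : L → ℕ be a map with f(k) ≥ 1 for every k ∈ L. Then there exist a numerical monoid H and a squarefree element a ∈ H such that the set of lengths of a in H equals L and, for every k ∈ L, the number of factorizations of a in H of length k equals f(k). -/

import Mathlib

/-- A numerical monoid: an additive submonoid of `ℕ` with finite complement. -/
def IsNumericalMonoid (H : AddSubmonoid ℕ) : Prop :=
  ((H : Set ℕ)ᶜ).Finite

/-- `u` is an atom of the additive submonoid `H` of `ℕ`: it is a nonzero element of `H`
that is not the sum of two nonzero elements of `H`. -/
def IsAtomOfN (H : AddSubmonoid ℕ) (u : ℕ) : Prop :=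
  u ∈ H ∧ u ≠ 0 ∧ ∀ v ∈ H, ∀ w ∈ H, v ≠ 0 → w ≠ 0 → u ≠ v + w

/-- `z` is a factorization of `a` in `H`: a multiset of atoms of `H` with sum `a`. -/
def IsFactorizationOfN (H : AddSubmonoid ℕ) (a : ℕ) (z : Multiset ℕ) : Prop :=
  (∀ x ∈ z, IsAtomOfN H x) ∧ z.sum = a

namespace Stmt8







/-- Base-q digit uniqueness. -/
lemma digit_unique {q : ℕ} (hq : 2 ≤ q) :
    ∀ (m : ℕ) (c c' : ℕ → ℕ), (∀ i < m, c i < q) → (∀ i < m, c' i < q) →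
      (∑ i ∈ Finset.range m, c i * q ^ i) = (∑ i ∈ Finset.range m, c' i * q ^ i) →
      ∀ i < m, c i = c' i := by
  intro m
  induction m with
  | zero => intro c c' _ _ _ i hi; omega
  | succ m ih =>
    intro c c' hc hc' hsum i hi
    have e1 : ∀ (d : ℕ → ℕ), (∑ i ∈ Finset.range (m+1), d i * q ^ i)
        = d 0 + q * (∑ i ∈ Finset.range m, d (i+1) * q ^ i) := by
      intro d
      rw [Finset.sum_range_succ']
      rw [Finset.mul_sum]
      simp [pow_succ, mul_comm, mul_assoc, mul_left_comm]
      ring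
    rw [e1 c, e1 c'] at hsum
    have h0 : c 0 = c' 0 := by
      have := congrArg (· % q) hsum
      simpa [Nat.add_mul_mod_self_left, Nat.mod_eq_of_lt (hc 0 (by omega)),
        Nat.mod_eq_of_lt (hc' 0 (by omega)), Nat.mul_comm] using this
    have h1 : (∑ i ∈ Finset.range m, c (i+1) * q ^ i)
        = (∑ i ∈ Finset.range m, c' (i+1) * q ^ i) := by
      rw [h0] at hsum
      have := Nat.add_left_cancel hsum
      exact Nat.eq_of_mul_eq_mul_left (by omega) this
    rcases Nat.eq_zero_or_pos i with rfl | hipos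
    · exact h0
    · have := ih (fun i => c (i+1)) (fun i => c' (i+1))
        (fun i hi => hc (i+1) (by omega)) (fun i hi => hc' (i+1) (by omega)) h1 (i-1) (by omega)
      simpa [Nat.sub_add_cancel hipos] using this

/-- division uniqueness -/
lemma unique_div {u n₁ n₂ r₁ r₂ : ℕ} (h₁ : r₁ < u) (h₂ : r₂ < u)
    (h : n₁ * u + r₁ = n₂ * u + r₂) : n₁ = n₂ ∧ r₁ = r₂ := by
  have hu : 0 < u := by omega
  have e1 : (u * n₁ + r₁) / u = n₁ + r₁ / u := Nat.mul_add_div hu _ _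
  have e2 : (u * n₂ + r₂) / u = n₂ + r₂ / u := Nat.mul_add_div hu _ _
  rw [Nat.div_eq_of_lt h₁] at e1
  rw [Nat.div_eq_of_lt h₂] at e2
  have : n₁ = n₂ := by
    rw [mul_comm n₁ u] at h; rw [mul_comm n₂ u] at h
    rw [h] at e1; omega
  constructor
  · exact this
  · subst this; omega

/-- power-sum injectivity for multisets -/
lemma powsum_inj {q m : ℕ} (hq : 2 ≤ q) (w v : Multiset ℕ)
    (hw : ∀ x ∈ w, x < m) (hv : ∀ x ∈ v, x < m)
    (hcw : ∀ i, w.count i < q) (hcv : ∀ i, v.count i < q)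
    (h : (w.map (q ^ ·)).sum = (v.map (q ^ ·)).sum) : w = v := by
  have key : ∀ (s : Multiset ℕ), (∀ x ∈ s, x < m) →
      (s.map (q ^ ·)).sum = ∑ i ∈ Finset.range m, s.count i * q ^ i := by
    intro s hs
    rw [Finset.sum_multiset_map_count]
    have hsub : s.toFinset ⊆ Finset.range m := by
      intro x hx
      simp only [Finset.mem_range]
      exact hs x (by simpa using hx)
    rw [Finset.sum_subset hsub (fun x _ hx => by
      have : s.count x = 0 := by
        rw [Multiset.count_eq_zero]
        intro hmem
        exact hx (Multiset.mem_toFinset.2 hmem)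
      simp [this])]
    exact Finset.sum_congr rfl (fun i _ => smul_eq_mul ..)
  rw [key w hw, key v hv] at h
  have := digit_unique hq m (fun i => w.count i) (fun i => v.count i)
    (fun i _ => hcw i) (fun i _ => hcv i) h
  ext i
  by_cases hi : i < m
  · exact this i hi
  · rw [Multiset.count_eq_zero.2 (fun hmem => hi (hw i hmem)),
      Multiset.count_eq_zero.2 (fun hmem => hi (hv i hmem))]



section Construction

variable (L : Finset ℕ) (f : ℕ → ℕ)

/-- The maximum of `L`. -/
def Cc : ℕ := L.sup id

/-- A strict bound for the multiplicities. -/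
def F : ℕ := L.sup f + 1

/-- The modulus / base. -/
def q : ℕ := 4 * Cc L + 7

/-- Bound for exponents. -/
def S : ℕ := F L f * (Cc L + 1) ^ 2

/-- The medium scale. -/
def u : ℕ := q L * q L ^ (S L f + 1) + 1

/-- The target element. -/
def a : ℕ := (2 * Cc L + 2) * u L f + (2 * Cc L + 4)

/-- Exponent index for factorization `(k, j)`, position `t`. -/
def idx (k j t : ℕ) : ℕ := t + (Cc L + 1) * (j + F L f * k)

/-- Index set of factorization `(k,j)`. -/
def I (k j : ℕ) : Finset ℕ := (Finset.range (k - 1)).image (idx L f k j)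

/-- Digit value of factorization `(k,j)`. -/
def dd (k j : ℕ) : ℕ := ∑ i ∈ I L f k j, q L ^ i

/-- Medium atom with exponent i. -/
def med (i : ℕ) : ℕ := u L f + q L ^ i

/-- Large closing atom of factorization `(k,j)`. -/
def V (k j : ℕ) : ℕ := a L f - ((k - 1) * u L f + dd L f k j)

/-- The designated factorization `(k,j)`. -/
def Zs (k j : ℕ) : Multiset ℕ := V L f k j ::ₘ (I L f k j).val.map (med L f)

/-- The finite set of small atoms. -/
def Atoms : Finset ℕ :=
  L.biUnion fun k => (Finset.range (f k)).biUnion fun j =>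
    insert (V L f k j) ((I L f k j).image (med L f))

/-- The numerical monoid. -/
def H : AddSubmonoid ℕ := AddSubmonoid.closure (↑(Atoms L f) ∪ Set.Ici (a L f + 1))

end Construction

section Facts

variable {L : Finset ℕ} {f : ℕ → ℕ}
variable (hL2 : ∀ k ∈ L, 2 ≤ k) (hf : ∀ k ∈ L, 1 ≤ f k)

lemma k_le_C {k : ℕ} (hk : k ∈ L) : k ≤ Cc L := Finset.le_sup (f := id) hk

lemma f_lt_F {k : ℕ} (hk : k ∈ L) : f k < F L f :=
  Nat.lt_succ_of_le (Finset.le_sup hk)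

include hL2 in
lemma two_le_C {k : ℕ} (hk : k ∈ L) : 2 ≤ Cc L := le_trans (hL2 k hk) (k_le_C hk)

lemma q_ge : 7 ≤ q L := by unfold q; omega

lemma idx_pos {k j t : ℕ} (hk2 : 1 ≤ k) : 1 ≤ idx L f k j t := by
  have h2 : 1 ≤ k := hk2
  have hF : 1 ≤ F L f := by unfold F; omega
  unfold idx
  have h1 : 1 ≤ F L f * k := Nat.one_le_iff_ne_zero.2 (by positivity)
  have h2 : 1 * 1 ≤ (Cc L + 1) * (j + F L f * k) :=
    Nat.mul_le_mul (by omega) (by omega)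
  omega

lemma idx_lt_S {k j t : ℕ} (hk : k ∈ L) (hj : j < f k) (ht : t < k - 1) :
    idx L f k j t < S L f := by
  have hkC : k ≤ Cc L := k_le_C hk
  have hjF : j < F L f := lt_of_lt_of_le hj (le_of_lt (f_lt_F hk))
  unfold idx S
  have hF : 1 ≤ F L f := by unfold F; omega
  obtain ⟨G, hG⟩ : ∃ G, F L f = G + 1 := ⟨F L f - 1, by omega⟩
  rw [hG]
  have h1 : j + (G + 1) * k ≤ G + (G + 1) * Cc L := by
    have := Nat.mul_le_mul_left (G + 1) hkC
    rw [hG] at hjF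
    omega
  have h2 : (Cc L + 1) * (j + (G + 1) * k) ≤ (Cc L + 1) * (G + (G + 1) * Cc L) :=
    Nat.mul_le_mul_left _ h1
  have key : (Cc L + 1) * (G + (G + 1) * Cc L) + (Cc L + 1) = (G + 1) * (Cc L + 1) ^ 2 := by
    ring
  have h3 : t ≤ Cc L - 1 := by have := k_le_C (L := L) hk; omega
  omega

lemma idx_inj {k j t k' j' t' : ℕ} (hk : k ∈ L) (hk' : k' ∈ L)
    (hj : j < f k) (hj' : j' < f k') (ht : t < k - 1) (ht' : t' < k' - 1)
    (h : idx L f k j t = idx L f k' j' t') : k = k' ∧ j = j' ∧ t = t' := by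
  have htC : t < Cc L + 1 := by have := k_le_C (L := L) hk; omega
  have htC' : t' < Cc L + 1 := by have := k_le_C (L := L) hk'; omega
  unfold idx at h
  have e1 : t = t' ∧ j + F L f * k = j' + F L f * k' := by
    constructor
    · have := congrArg (· % (Cc L + 1)) h
      simpa [Nat.add_mul_mod_self_left, Nat.mod_eq_of_lt htC, Nat.mod_eq_of_lt htC'] using this
    · have := congrArg (· / (Cc L + 1)) h
      rw [Nat.add_mul_div_left _ _ (by omega), Nat.add_mul_div_left _ _ (by omega),
        Nat.div_eq_of_lt htC, Nat.div_eq_of_lt htC'] at this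
      omega
  obtain ⟨rfl, e2⟩ := e1
  have hjF : j < F L f := lt_of_lt_of_le hj (le_of_lt (f_lt_F hk))
  have hjF' : j' < F L f := lt_of_lt_of_le hj' (le_of_lt (f_lt_F hk'))
  have : j = j' ∧ k = k' := by
    constructor
    · have := congrArg (· % F L f) e2
      simpa [Nat.add_mul_mod_self_left, Nat.mod_eq_of_lt hjF, Nat.mod_eq_of_lt hjF'] using this
    · have := congrArg (· / F L f) e2
      rw [Nat.add_mul_div_left _ _ (by omega), Nat.add_mul_div_left _ _ (by omega),
        Nat.div_eq_of_lt hjF, Nat.div_eq_of_lt hjF'] at this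
      omega
  exact ⟨this.2, this.1, rfl⟩

end Facts


section Bounds

variable {L : Finset ℕ} {f : ℕ → ℕ}

lemma I_card {k j : ℕ} (hk : k ∈ L) (hj : j < f k) : (I L f k j).card = k - 1 := by
  rw [I, Finset.card_image_of_injOn, Finset.card_range]
  intro t ht t' ht' h
  simp only [Finset.coe_range, Set.mem_Iio] at ht ht'
  exact (idx_inj hk hk hj hj ht ht' h).2.2

lemma mem_I_iff {k j i : ℕ} :
    i ∈ I L f k j ↔ ∃ t < k - 1, i = idx L f k j t := by
  simp only [I, Finset.mem_image, Finset.mem_range]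
  constructor
  · rintro ⟨t, ht, rfl⟩; exact ⟨t, ht, rfl⟩
  · rintro ⟨t, ht, rfl⟩; exact ⟨t, ht, rfl⟩

lemma I_subset_range {k j : ℕ} (hk : k ∈ L) (hj : j < f k) :
    I L f k j ⊆ Finset.range (S L f) := by
  intro i hi
  obtain ⟨t, ht, rfl⟩ := mem_I_iff.1 hi
  exact Finset.mem_range.2 (idx_lt_S hk hj ht)

lemma pow_le_S {i : ℕ} (hi : i < S L f) : q L ^ i ≤ q L ^ (S L f) :=
  Nat.pow_le_pow_right (by have := q_ge (L := L); omega) (le_of_lt hi)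

lemma dd_le {k j : ℕ} (hk : k ∈ L) (hj : j < f k) :
    dd L f k j ≤ (k - 1) * q L ^ (S L f) := by
  have h1 : dd L f k j ≤ (I L f k j).card • q L ^ (S L f) :=
    Finset.sum_le_card_nsmul _ _ _ (fun i hi =>
      pow_le_S (Finset.mem_range.1 (I_subset_range hk hj hi)))
  rwa [I_card hk hj, smul_eq_mul] at h1

lemma CqS_lt_u {c : ℕ} (hc : c ≤ 3 * Cc L + 3) : c * q L ^ (S L f) < u L f := by
  have hq : 7 ≤ q L := q_ge
  have h2 : c < q L := by unfold q; omega
  have h3 : c * q L ^ (S L f) < q L * q L ^ (S L f) := by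
    have hp : 0 < q L ^ (S L f) := Nat.pow_pos (by omega)
    exact (Nat.mul_lt_mul_right hp).mpr h2
  have h4 : q L * q L ^ (S L f) ≤ q L * q L ^ (S L f + 1) := by
    exact Nat.mul_le_mul_left _ (Nat.pow_le_pow_right (by omega) (by omega))
  unfold u
  omega

lemma dd_lt_u {k j : ℕ} (hk : k ∈ L) (hj : j < f k) : dd L f k j < u L f := by
  have h1 := dd_le hk hj
  have h2 : (k - 1) * q L ^ (S L f) < u L f :=
    CqS_lt_u (by have := k_le_C (L := L) hk; omega)
  omega

lemma C_lt_u : 4 * Cc L + 7 ≤ u L f := by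
  have h1 : q L ≤ q L ^ (S L f + 1) := Nat.le_self_pow (by omega) _
  have h2 : 1 * q L ^ (S L f + 1) ≤ q L * q L ^ (S L f + 1) :=
    Nat.mul_le_mul_right _ (by have := q_ge (L := L); omega)
  have := q_ge (L := L)
  unfold u q at *
  omega

lemma T_le {k j : ℕ} (hk : k ∈ L) (hk2 : 2 ≤ k) (hj : j < f k) :
    (k - 1) * u L f + dd L f k j ≤ Cc L * u L f := by
  have hC : 2 ≤ Cc L := le_trans hk2 (k_le_C hk)
  have h1 : k - 1 ≤ Cc L - 1 := by have := k_le_C (L := L) hk; omega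
  have h2 : (k - 1) * u L f ≤ (Cc L - 1) * u L f := Nat.mul_le_mul_right _ h1
  have h3 : dd L f k j < u L f := dd_lt_u hk hj
  have h4 : (Cc L - 1) * u L f + u L f = Cc L * u L f := by
    have h5 : Cc L - 1 + 1 = Cc L := by omega
    calc (Cc L - 1) * u L f + u L f = (Cc L - 1 + 1) * u L f := by ring
      _ = Cc L * u L f := by rw [h5]
  omega

lemma T_le_a {k j : ℕ} (hk : k ∈ L) (hk2 : 2 ≤ k) (hj : j < f k) :
    (k - 1) * u L f + dd L f k j ≤ a L f := by
  have h1 := T_le hk hk2 hj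
  have h2 : Cc L * u L f ≤ (2 * Cc L + 2) * u L f :=
    Nat.mul_le_mul_right _ (by omega)
  unfold a
  omega

lemma V_add {k j : ℕ} (hk : k ∈ L) (hk2 : 2 ≤ k) (hj : j < f k) :
    V L f k j + ((k - 1) * u L f + dd L f k j) = a L f := by
  rw [V, Nat.sub_add_cancel (T_le_a hk hk2 hj)]

lemma V_lb {k j : ℕ} (hk : k ∈ L) (hk2 : 2 ≤ k) (hj : j < f k) :
    (Cc L + 2) * u L f ≤ V L f k j := by
  have h1 := V_add hk hk2 hj
  have h2 := T_le hk hk2 hj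
  have h3 : (Cc L + 2) * u L f + Cc L * u L f = (2 * Cc L + 2) * u L f := by ring
  unfold a at h1
  omega

lemma a_lt : a L f < (2 * Cc L + 3) * u L f := by
  have h1 := C_lt_u (L := L) (f := f)
  have h2 : (2 * Cc L + 2) * u L f + 1 * u L f = (2 * Cc L + 3) * u L f := by ring
  unfold a
  omega

lemma V_le_a {k j : ℕ} : V L f k j ≤ a L f := Nat.sub_le _ _

lemma med_lt {i : ℕ} (hi : i < S L f) : med L f i < 2 * u L f := by
  have h1 : q L ^ i ≤ q L ^ (S L f) := pow_le_S hi
  have h2 : 1 * q L ^ (S L f) < u L f := CqS_lt_u (by omega)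
  unfold med
  omega

lemma med_lt_V {i k j : ℕ} (hi : i < S L f) (hk : k ∈ L) (hk2 : 2 ≤ k) (hj : j < f k) :
    med L f i < V L f k j := by
  have h1 := med_lt (L := L) (f := f) hi
  have h2 := V_lb hk hk2 hj
  have h3 : 2 * u L f ≤ (Cc L + 2) * u L f := Nat.mul_le_mul_right _ (by omega)
  omega

lemma med_ge {i : ℕ} : u L f + 1 ≤ med L f i := by
  have : 1 ≤ q L ^ i := Nat.one_le_pow _ _ (by have := q_ge (L := L); omega)
  unfold med; omega

lemma u_pos : 0 < u L f := by unfold u; omega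

lemma V_ge {k j : ℕ} (hk : k ∈ L) (hk2 : 2 ≤ k) (hj : j < f k) :
    u L f + 1 ≤ V L f k j := by
  have h1 := V_lb hk hk2 hj
  have h2 : 2 * u L f ≤ (Cc L + 2) * u L f := Nat.mul_le_mul_right _ (by omega)
  have := u_pos (L := L) (f := f)
  omega

end Bounds

section ModAndMembership

variable {L : Finset ℕ} {f : ℕ → ℕ}

lemma u_modeq : u L f ≡ 1 [MOD q L] := by
  show u L f % q L = 1 % q L
  unfold u
  rw [Nat.mul_add_mod]

lemma q_dvd_dd {k j : ℕ} (hk2 : 1 ≤ k) : q L ∣ dd L f k j := by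
  apply Finset.dvd_sum
  intro i hi
  obtain ⟨t, ht, rfl⟩ := mem_I_iff.1 hi
  exact dvd_pow_self _ (by have := idx_pos (L := L) (f := f) (j := j) (t := t) hk2; omega)

lemma q_dvd_powsum {w : Multiset ℕ} (hw : ∀ i ∈ w, 1 ≤ i) :
    q L ∣ (w.map (q L ^ ·)).sum := by
  apply Multiset.dvd_sum
  intro x hx
  obtain ⟨i, hi, rfl⟩ := Multiset.mem_map.1 hx
  exact dvd_pow_self _ (by have := hw i hi; omega)

lemma medsum_eq (w : Multiset ℕ) :
    ((w.map (med L f)).sum) = Multiset.card w * u L f + (w.map (q L ^ ·)).sum := by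
  have h : (w.map (med L f)) = w.map (fun i => u L f + q L ^ i) := rfl
  rw [h, Multiset.sum_map_add]
  congr 1
  rw [Multiset.map_const']
  simp [mul_comm]

lemma medsum_modeq {w : Multiset ℕ} (hw : ∀ i ∈ w, 1 ≤ i) :
    ((w.map (med L f)).sum) ≡ Multiset.card w [MOD q L] := by
  rw [medsum_eq]
  have h1 : u L f ≡ 1 [MOD q L] := u_modeq
  have h2 : (w.map (q L ^ ·)).sum ≡ 0 [MOD q L] :=
    (Nat.modEq_zero_iff_dvd).2 (q_dvd_powsum hw)
  calc Multiset.card w * u L f + (w.map (q L ^ ·)).sum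
      ≡ Multiset.card w * 1 + 0 [MOD q L] := (h1.mul_left _).add h2
    _ = Multiset.card w := by ring

lemma a_modeq : a L f ≡ 4 * Cc L + 6 [MOD q L] := by
  show (2 * Cc L + 2) * u L f + (2 * Cc L + 4) ≡ _ [MOD q L]
  calc (2 * Cc L + 2) * u L f + (2 * Cc L + 4)
      ≡ (2 * Cc L + 2) * 1 + (2 * Cc L + 4) [MOD q L] :=
        ((u_modeq).mul_left _).add_right _
    _ = 4 * Cc L + 6 := by ring

lemma modeq_eq_of_lt {x y m : ℕ} (h : x ≡ y [MOD m]) (hx : x < m) (hy : y < m) : x = y := by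
  have := h
  unfold Nat.ModEq at this
  rwa [Nat.mod_eq_of_lt hx, Nat.mod_eq_of_lt hy] at this

lemma mem_Atoms_iff {w : ℕ} : w ∈ Atoms L f ↔
    ∃ k ∈ L, ∃ j < f k, (w = V L f k j ∨ ∃ i ∈ I L f k j, w = med L f i) := by
  unfold Atoms
  simp only [Finset.mem_biUnion, Finset.mem_range, Finset.mem_insert, Finset.mem_image]
  constructor
  · rintro ⟨k, hk, j, hj, h⟩
    refine ⟨k, hk, j, hj, ?_⟩
    rcases h with h | ⟨i, hi, rfl⟩
    · exact Or.inl h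
    · exact Or.inr ⟨i, hi, rfl⟩
  · rintro ⟨k, hk, j, hj, h⟩
    refine ⟨k, hk, j, hj, ?_⟩
    rcases h with h | ⟨i, hi, rfl⟩
    · exact Or.inl h
    · exact Or.inr ⟨i, hi, rfl⟩

lemma Atoms_ge {w : ℕ} (hL2 : ∀ k ∈ L, 2 ≤ k) (hw : w ∈ Atoms L f) : u L f + 1 ≤ w := by
  obtain ⟨k, hk, j, hj, h⟩ := mem_Atoms_iff.1 hw
  rcases h with rfl | ⟨i, hi, rfl⟩
  · exact V_ge hk (hL2 k hk) hj
  · exact med_ge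

lemma mem_H_of_Atoms {w : ℕ} (hw : w ∈ Atoms L f) : w ∈ H L f :=
  AddSubmonoid.subset_closure (Or.inl hw)

lemma mem_H_high {x : ℕ} (hx : a L f + 1 ≤ x) : x ∈ H L f :=
  AddSubmonoid.subset_closure (Or.inr hx)

lemma mem_H_low {x : ℕ} (hx : x ∈ H L f) (hxa : x ≤ a L f) :
    ∃ z : Multiset ℕ, (∀ y ∈ z, y ∈ Atoms L f) ∧ z.sum = x := by
  revert hxa
  induction hx using AddSubmonoid.closure_induction with
  | mem x h =>
    intro hxa
    rcases h with h | h
    · exact ⟨{x}, by simpa using h, by simp⟩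
    · exact absurd hxa (by simp only [Set.mem_Ici] at h; omega)
  | zero => exact fun _ => ⟨0, by simp, rfl⟩
  | add x y hx hy ihx ihy =>
    intro hxa
    obtain ⟨zx, hzx, hzxs⟩ := ihx (by omega)
    obtain ⟨zy, hzy, hzys⟩ := ihy (by omega)
    exact ⟨zx + zy, fun t ht => by
      rcases Multiset.mem_add.1 ht with h | h
      exacts [hzx t h, hzy t h], by rw [Multiset.sum_add, hzxs, hzys]⟩

end ModAndMembership

section Core

variable {L : Finset ℕ} {f : ℕ → ℕ}

lemma two_mem {s : Multiset ℕ} (h : 2 ≤ Multiset.card s) : ∃ x y t, s = x ::ₘ y ::ₘ t := by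
  have h1 : s ≠ 0 := by intro h0; simp [h0] at h
  obtain ⟨x, hx⟩ := Multiset.exists_mem_of_ne_zero h1
  obtain ⟨s', rfl⟩ := Multiset.exists_cons_of_mem hx
  have h2 : s' ≠ 0 := by
    intro h0
    rw [h0] at h
    simp at h
  obtain ⟨y, hy⟩ := Multiset.exists_mem_of_ne_zero h2
  obtain ⟨t, rfl⟩ := Multiset.exists_cons_of_mem hy
  exact ⟨x, y, t, rfl⟩

lemma small_atom_is_med {x : ℕ} (hL2 : ∀ k ∈ L, 2 ≤ k) (hx : x ∈ Atoms L f)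
    (hlt : x < (Cc L + 2) * u L f) : ∃ i, 1 ≤ i ∧ i < S L f ∧ x = med L f i := by
  obtain ⟨k, hk, j, hj, h⟩ := mem_Atoms_iff.1 hx
  rcases h with rfl | ⟨i, hi, rfl⟩
  · exact absurd hlt (not_lt.2 (V_lb hk (hL2 k hk) hj))
  · obtain ⟨t, ht, rfl⟩ := mem_I_iff.1 hi
    exact ⟨_, idx_pos (by have := hL2 k hk; omega), idx_lt_S hk hj ht, rfl⟩

lemma exists_expvec {z : Multiset ℕ}
    (hz : ∀ x ∈ z, ∃ i, 1 ≤ i ∧ i < S L f ∧ x = med L f i) :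
    ∃ w : Multiset ℕ, (∀ i ∈ w, 1 ≤ i ∧ i < S L f) ∧ z = w.map (med L f) := by
  induction z using Multiset.induction_on with
  | empty => exact ⟨0, by simp, by simp⟩
  | cons x s ih =>
    obtain ⟨w, hw, rfl⟩ := ih (fun y hy => hz y (Multiset.mem_cons_of_mem hy))
    obtain ⟨i, hi1, hi2, rfl⟩ := hz x (Multiset.mem_cons_self _ _)
    exact ⟨i ::ₘ w, fun j hj => by
      rcases Multiset.mem_cons.1 hj with rfl | hj
      · exact ⟨hi1, hi2⟩
      · exact hw j hj, by simp⟩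

lemma card_le_of_sum (hL2 : ∀ k ∈ L, 2 ≤ k) {z : Multiset ℕ}
    (hz : ∀ x ∈ z, x ∈ Atoms L f) (hs : z.sum ≤ a L f) :
    Multiset.card z ≤ 2 * Cc L + 2 := by
  have h1 : Multiset.card z • u L f ≤ z.sum :=
    Multiset.card_nsmul_le_sum (fun x hx => by have := Atoms_ge hL2 (hz x hx); omega)
  rw [smul_eq_mul] at h1
  have h2 := a_lt (L := L) (f := f)
  have h3 : Multiset.card z * u L f < (2 * Cc L + 3) * u L f := by omega
  have h4 : Multiset.card z < 2 * Cc L + 3 :=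
    Nat.lt_of_mul_lt_mul_right h3
  omega

lemma powsum_le {w : Multiset ℕ} (hw : ∀ i ∈ w, i < S L f) :
    (w.map (q L ^ ·)).sum ≤ Multiset.card w * q L ^ (S L f) := by
  have := Multiset.sum_le_card_nsmul (w.map (q L ^ ·)) (q L ^ (S L f)) (by
    intro x hx
    obtain ⟨i, hi, rfl⟩ := Multiset.mem_map.1 hx
    exact pow_le_S (hw i hi))
  simpa using this

lemma powsum_lt_u {w : Multiset ℕ} (hw : ∀ i ∈ w, i < S L f)
    (hc : Multiset.card w ≤ 3 * Cc L + 3) : (w.map (q L ^ ·)).sum < u L f := by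
  have h1 := powsum_le hw
  have h2 : Multiset.card w * q L ^ (S L f) < u L f := CqS_lt_u hc
  omega

lemma dd_eq_powsum {k j : ℕ} : dd L f k j = ((I L f k j).val.map (q L ^ ·)).sum := rfl

lemma count_I_le {k j i : ℕ} : (I L f k j).val.count i ≤ 1 :=
  Multiset.nodup_iff_count_le_one.1 (I L f k j).nodup i

/-- The key classification: any multiset of atoms summing to `a` is a designated one. -/
lemma classify (hL2 : ∀ k ∈ L, 2 ≤ k) {z : Multiset ℕ} (hz : ∀ x ∈ z, x ∈ Atoms L f)
    (hsum : z.sum = a L f) : ∃ k ∈ L, ∃ j < f k, z = Zs L f k j := by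
  classical
  have hsplit := Multiset.filter_add_not (fun x => (Cc L + 2) * u L f ≤ x) z
  set zV := z.filter (fun x => (Cc L + 2) * u L f ≤ x) with hzV
  set zM := z.filter (fun x => ¬ (Cc L + 2) * u L f ≤ x) with hzM
  have hzMatoms : ∀ x ∈ zM, ∃ i, 1 ≤ i ∧ i < S L f ∧ x = med L f i := by
    intro x hx
    have h1 := Multiset.mem_filter.1 hx
    exact small_atom_is_med hL2 (hz x h1.1) (by omega)
  obtain ⟨w, hw, hweq⟩ := exists_expvec hzMatoms
  have hcz : Multiset.card z ≤ 2 * Cc L + 2 := card_le_of_sum hL2 hz (le_of_eq hsum)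
  have hcardsplit : Multiset.card zV + Multiset.card zM = Multiset.card z := by
    rw [← hsplit]; simp
  have hcw : Multiset.card w ≤ 2 * Cc L + 2 := by
    have : Multiset.card zM = Multiset.card w := by rw [hweq]; simp
    omega
  have hsumsplit : zV.sum + zM.sum = a L f := by rw [← hsum, ← hsplit]; simp
  have hq7 : 7 ≤ q L := q_ge
  -- case on card zV
  rcases Nat.lt_or_ge (Multiset.card zV) 2 with hV2 | hV2
  · rcases Nat.lt_or_ge (Multiset.card zV) 1 with hV1 | hV1
    · -- no V atom: contradiction mod q
      exfalso
      have hzV0 : zV = 0 := Multiset.card_eq_zero.1 (by omega)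
      rw [hzV0] at hsumsplit
      simp at hsumsplit
      rw [hweq] at hsumsplit
      have hmod : (Multiset.card w) ≡ 4 * Cc L + 6 [MOD q L] := by
        calc (Multiset.card w : ℕ) ≡ (w.map (med L f)).sum [MOD q L] :=
              (medsum_modeq (fun i hi => (hw i hi).1)).symm
          _ = a L f := hsumsplit
          _ ≡ 4 * Cc L + 6 [MOD q L] := a_modeq
      have := modeq_eq_of_lt hmod (by unfold q; omega) (by unfold q; omega)
      omega
    · -- exactly one V atom
      have hzV1 : ∃ x, zV = {x} := Multiset.card_eq_one.1 (by omega)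
      obtain ⟨x, hx1⟩ := hzV1
      have hxz : x ∈ z := by
        have : x ∈ zV := by rw [hx1]; simp
        exact (Multiset.mem_filter.1 this).1
      have hxP : (Cc L + 2) * u L f ≤ x := by
        have : x ∈ zV := by rw [hx1]; simp
        exact (Multiset.mem_filter.1 this).2
      obtain ⟨k, hk, j, hj, hcase⟩ := mem_Atoms_iff.1 (hz x hxz)
      rcases hcase with rfl | ⟨i, hi, rfl⟩
      swap
      · exfalso
        obtain ⟨t, ht, rfl⟩ := mem_I_iff.1 hi
        have h1 := med_lt (L := L) (f := f) (idx_lt_S hk hj ht)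
        have h2 : 2 * u L f ≤ (Cc L + 2) * u L f := Nat.mul_le_mul_right _ (by omega)
        omega
      · refine ⟨k, hk, j, hj, ?_⟩
        have hk2 : 2 ≤ k := hL2 k hk
        -- sum equation
        rw [hx1, hweq] at hsumsplit
        simp only [Multiset.sum_singleton] at hsumsplit
        rw [medsum_eq] at hsumsplit
        have hVadd := V_add hk hk2 hj
        have hPw : (w.map (q L ^ ·)).sum < u L f :=
          powsum_lt_u (fun i hi => (hw i hi).2) (by omega)
        have hdd : dd L f k j < u L f := dd_lt_u hk hj
        have hkey : Multiset.card w * u L f + (w.map (q L ^ ·)).sum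
            = (k - 1) * u L f + dd L f k j := by
          have := hVadd
          omega
        obtain ⟨hn, hP⟩ := unique_div hPw hdd hkey
        -- multiset equality
        have hwI : w = (I L f k j).val := by
          apply powsum_inj (q := q L) (m := S L f) (by omega)
          · exact fun i hi => (hw i hi).2
          · intro i hi
            exact Finset.mem_range.1 (I_subset_range hk hj hi)
          · intro i
            calc w.count i ≤ Multiset.card w := Multiset.count_le_card _ _
              _ < q L := by unfold q; omega
          · intro i
            calc (I L f k j).val.count i ≤ 1 := count_I_le
              _ < q L := by omega
          · rw [hP, dd_eq_powsum]
        rw [← hsplit, hx1, hweq, hwI, Multiset.singleton_add, Zs]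
  · -- two or more V atoms: sum too big
    exfalso
    obtain ⟨x, y, t, hxyt⟩ := two_mem hV2
    have hxP : (Cc L + 2) * u L f ≤ x := by
      have : x ∈ zV := by rw [hxyt]; simp
      exact (Multiset.mem_filter.1 this).2
    have hyP : (Cc L + 2) * u L f ≤ y := by
      have : y ∈ zV := by rw [hxyt]; simp
      exact (Multiset.mem_filter.1 this).2
    have hs : x + y ≤ a L f := by
      have h1 : zV.sum = x + (y + t.sum) := by rw [hxyt]; simp
      omega
    have h2 := a_lt (L := L) (f := f)
    have h3 : (2 * Cc L + 3) * u L f ≤ (Cc L + 2) * u L f + (Cc L + 2) * u L f := by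
      have : (Cc L + 2) * u L f + (Cc L + 2) * u L f = (2 * Cc L + 4) * u L f := by ring
      rw [this]
      exact Nat.mul_le_mul_right _ (by omega)
    omega

end Core

section AtomCore

variable {L : Finset ℕ} {f : ℕ → ℕ}

/-- No multiset of two or more atoms sums to an atom. -/
lemma no_sum_to_atom (hL2 : ∀ k ∈ L, 2 ≤ k) {x0 : ℕ} (hx0 : x0 ∈ Atoms L f)
    {z : Multiset ℕ} (hz : ∀ x ∈ z, x ∈ Atoms L f) (hc2 : 2 ≤ Multiset.card z)
    (hsum : z.sum = x0) : False := by
  classical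
  have hq7 : 7 ≤ q L := q_ge
  have hzge : ∀ x ∈ z, u L f + 1 ≤ x := fun x hx => Atoms_ge hL2 (hz x hx)
  have hsumge : 2 * (u L f + 1) ≤ x0 := by
    obtain ⟨x, y, t, rfl⟩ := two_mem hc2
    have h1 := hzge x (by simp)
    have h2 := hzge y (by simp)
    have h3 : x + y ≤ x0 := by rw [← hsum, Multiset.sum_cons, Multiset.sum_cons]; omega
    omega
  obtain ⟨k, hk, j, hj, hcase⟩ := mem_Atoms_iff.1 hx0
  rcases hcase with rfl | ⟨i, hi, rfl⟩
  swap
  · -- medium target: too small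
    obtain ⟨t, ht, rfl⟩ := mem_I_iff.1 hi
    have h1 := med_lt (L := L) (f := f) (idx_lt_S hk hj ht)
    omega
  · have hk2 : 2 ≤ k := hL2 k hk
    have hVa : V L f k j ≤ a L f := V_le_a
    have hsuma : z.sum ≤ a L f := by omega
    -- split
    have hsplit := Multiset.filter_add_not (fun x => (Cc L + 2) * u L f ≤ x) z
    set zV := z.filter (fun x => (Cc L + 2) * u L f ≤ x) with hzV
    set zM := z.filter (fun x => ¬ (Cc L + 2) * u L f ≤ x) with hzM
    have hzMatoms : ∀ x ∈ zM, ∃ i, 1 ≤ i ∧ i < S L f ∧ x = med L f i := by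
      intro x hx
      have h1 := Multiset.mem_filter.1 hx
      exact small_atom_is_med hL2 (hz x h1.1) (by omega)
    obtain ⟨w, hw, hweq⟩ := exists_expvec hzMatoms
    have hcz : Multiset.card z ≤ 2 * Cc L + 2 := card_le_of_sum hL2 hz hsuma
    have hcardsplit : Multiset.card zV + Multiset.card zM = Multiset.card z := by
      rw [← hsplit]; simp
    have hcwM : Multiset.card zM = Multiset.card w := by rw [hweq]; simp
    have hcw : Multiset.card w ≤ 2 * Cc L + 2 := by omega
    have hsumsplit : zV.sum + zM.sum = V L f k j := by rw [← hsum, ← hsplit]; simp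
    have hVadd := V_add hk hk2 hj
    rcases Nat.lt_or_ge (Multiset.card zV) 2 with hV2 | hV2
    · rcases Nat.lt_or_ge (Multiset.card zV) 1 with hV1 | hV1
      · -- no V atom: mod q contradiction
        have hzV0 : zV = 0 := Multiset.card_eq_zero.1 (by omega)
        rw [hzV0] at hsumsplit
        simp only [Multiset.sum_zero, zero_add] at hsumsplit
        rw [hweq] at hsumsplit
        have hmod : Multiset.card w + (k - 1) ≡ 4 * Cc L + 6 [MOD q L] := by
          calc Multiset.card w + (k - 1)
              ≡ (w.map (med L f)).sum + (k - 1) * u L f [MOD q L] := by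
                refine Nat.ModEq.add ?_ ?_
                · exact (medsum_modeq (fun i hi => (hw i hi).1)).symm
                · calc (k - 1) = (k - 1) * 1 := by ring
                    _ ≡ (k - 1) * u L f [MOD q L] := (u_modeq (L := L) (f := f)).symm.mul_left _
            _ ≡ (w.map (med L f)).sum + (k - 1) * u L f + dd L f k j [MOD q L] := by
                have hdvd : q L ∣ dd L f k j := q_dvd_dd (by omega)
                calc (w.map (med L f)).sum + (k - 1) * u L f
                    = (w.map (med L f)).sum + (k - 1) * u L f + 0 := by ring
                  _ ≡ (w.map (med L f)).sum + (k - 1) * u L f + dd L f k j [MOD q L] :=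
                      Nat.ModEq.add_left _ ((Nat.modEq_zero_iff_dvd).2 hdvd).symm
            _ = V L f k j + ((k - 1) * u L f + dd L f k j) := by rw [hsumsplit]; ring
            _ = a L f := hVadd
            _ ≡ 4 * Cc L + 6 [MOD q L] := a_modeq
        have hkC := k_le_C (L := L) hk
        have := modeq_eq_of_lt hmod (by unfold q; omega) (by unfold q; omega)
        omega
      · -- exactly one V atom
        obtain ⟨x, hx1⟩ := Multiset.card_eq_one.1 (Nat.le_antisymm (Nat.lt_succ_iff.mp hV2) hV1)
        have hxz : x ∈ z := by
          have : x ∈ zV := by rw [hx1]; simp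
          exact (Multiset.mem_filter.1 this).1
        have hxP : (Cc L + 2) * u L f ≤ x := by
          have : x ∈ zV := by rw [hx1]; simp
          exact (Multiset.mem_filter.1 this).2
        obtain ⟨k', hk', j', hj', hcase'⟩ := mem_Atoms_iff.1 (hz x hxz)
        rcases hcase' with rfl | ⟨i', hi', rfl⟩
        swap
        · obtain ⟨t', ht', rfl⟩ := mem_I_iff.1 hi'
          have h1 := med_lt (L := L) (f := f) (idx_lt_S hk' hj' ht')
          have h2 : 2 * u L f ≤ (Cc L + 2) * u L f := Nat.mul_le_mul_right _ (by omega)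
          omega
        · have hk2' : 2 ≤ k' := hL2 k' hk'
          have hVadd' := V_add hk' hk2' hj'
          -- main equation
          rw [hx1, hweq] at hsumsplit
          simp only [Multiset.sum_singleton] at hsumsplit
          rw [medsum_eq] at hsumsplit
          -- add (k-1)u + dd to both sides, cancel V k' j'
          have hkey : (Multiset.card w + (k - 1)) * u L f
              + ((w.map (q L ^ ·)).sum + dd L f k j) = (k' - 1) * u L f + dd L f k' j' := by
            have e1 : V L f k' j' + ((Multiset.card w + (k - 1)) * u L f
                + ((w.map (q L ^ ·)).sum + dd L f k j))
                = V L f k' j' + ((k' - 1) * u L f + dd L f k' j') := by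
              rw [hVadd']
              rw [← hVadd]
              have : (Multiset.card w + (k - 1)) * u L f
                  = Multiset.card w * u L f + (k - 1) * u L f := by ring
              omega
            exact Nat.add_left_cancel e1
          have hdd : dd L f k j ≤ (k - 1) * q L ^ (S L f) := dd_le hk hj
          have hdd2 : (k - 1) * q L ^ (S L f) + Multiset.card w * q L ^ (S L f)
              = (k - 1 + Multiset.card w) * q L ^ (S L f) := by ring
          have hkC := k_le_C (L := L) hk
          have hsmall : (w.map (q L ^ ·)).sum + dd L f k j < u L f := by
            have h1 := powsum_le (L := L) (f := f) (fun i hi => (hw i hi).2)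
            have h2 : (k - 1 + Multiset.card w) * q L ^ (S L f) < u L f :=
              CqS_lt_u (by omega)
            omega
          have hdd' : dd L f k' j' < u L f := dd_lt_u hk' hj'
          obtain ⟨hn, hP⟩ := unique_div hsmall hdd' hkey
          -- multiset equality
          have hwI : w + (I L f k j).val = (I L f k' j').val := by
            apply powsum_inj (q := q L) (m := S L f) (by omega)
            · intro i hi
              rcases Multiset.mem_add.1 hi with h | h
              · exact (hw i h).2
              · exact Finset.mem_range.1 (I_subset_range hk hj h)
            · intro i hi
              exact Finset.mem_range.1 (I_subset_range hk' hj' hi)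
            · intro i
              have c1 : w.count i ≤ Multiset.card w := Multiset.count_le_card _ _
              have c2 : (I L f k j).val.count i ≤ 1 := count_I_le
              rw [Multiset.count_add]
              unfold q
              omega
            · intro i
              have c2 : (I L f k' j').val.count i ≤ 1 := count_I_le
              unfold q
              omega
            · rw [Multiset.map_add, Multiset.sum_add, ← dd_eq_powsum, ← dd_eq_powsum]
              exact hP
          -- derive k = k', j = j'
          have hmem : idx L f k j 0 ∈ I L f k' j' := by
            have h1 : idx L f k j 0 ∈ I L f k j := mem_I_iff.2 ⟨0, by omega, rfl⟩
            have h2 : idx L f k j 0 ∈ w + (I L f k j).val := by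
              rw [Multiset.mem_add]
              exact Or.inr h1
            rw [hwI] at h2
            exact h2
          obtain ⟨t', ht', heqidx⟩ := mem_I_iff.1 hmem
          obtain ⟨hkk, hjj, -⟩ := idx_inj hk hk' hj hj' (by omega) ht' heqidx
          subst hkk; subst hjj
          -- card w = 0 contradiction
          have : Multiset.card w = 0 := by omega
          omega
    · -- two V atoms: too big
      obtain ⟨x, y, t, hxyt⟩ := two_mem hV2
      have hxP : (Cc L + 2) * u L f ≤ x := by
        have : x ∈ zV := by rw [hxyt]; simp
        exact (Multiset.mem_filter.1 this).2
      have hyP : (Cc L + 2) * u L f ≤ y := by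
        have : y ∈ zV := by rw [hxyt]; simp
        exact (Multiset.mem_filter.1 this).2
      have hs : x + y ≤ a L f := by
        have h1 : zV.sum = x + (y + t.sum) := by rw [hxyt]; simp
        omega
      have h2 := a_lt (L := L) (f := f)
      have h3 : (2 * Cc L + 3) * u L f ≤ (Cc L + 2) * u L f + (Cc L + 2) * u L f := by
        have he : (Cc L + 2) * u L f + (Cc L + 2) * u L f = (2 * Cc L + 4) * u L f := by ring
        rw [he]
        exact Nat.mul_le_mul_right _ (by omega)
      omega

end AtomCore

section Derived

variable {L : Finset ℕ} {f : ℕ → ℕ}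

lemma Zs_sum {k j : ℕ} (hk : k ∈ L) (hk2 : 2 ≤ k) (hj : j < f k) :
    (Zs L f k j).sum = a L f := by
  rw [Zs, Multiset.sum_cons, medsum_eq, ← dd_eq_powsum]
  have hcard : Multiset.card (I L f k j).val = k - 1 := I_card hk hj
  rw [hcard]
  exact V_add hk hk2 hj

lemma Zs_card {k j : ℕ} (hk : k ∈ L) (hk2 : 2 ≤ k) (hj : j < f k) :
    Multiset.card (Zs L f k j) = k := by
  rw [Zs, Multiset.card_cons]
  have hcard : Multiset.card (I L f k j).val = k - 1 := I_card hk hj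
  rw [Multiset.card_map, hcard]
  omega

lemma Zs_mem_Atoms {k j : ℕ} (hk : k ∈ L) (hj : j < f k) :
    ∀ x ∈ Zs L f k j, x ∈ Atoms L f := by
  intro x hx
  rw [Zs, Multiset.mem_cons] at hx
  rcases hx with rfl | hx
  · exact mem_Atoms_iff.2 ⟨k, hk, j, hj, Or.inl rfl⟩
  · obtain ⟨i, hi, rfl⟩ := Multiset.mem_map.1 hx
    exact mem_Atoms_iff.2 ⟨k, hk, j, hj, Or.inr ⟨i, hi, rfl⟩⟩

lemma Atoms_le_a (hL2 : ∀ k ∈ L, 2 ≤ k) {x : ℕ} (hx : x ∈ Atoms L f) : x ≤ a L f := by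
  obtain ⟨k, hk, j, hj, hcase⟩ := mem_Atoms_iff.1 hx
  rcases hcase with rfl | ⟨i, hi, rfl⟩
  · exact V_le_a
  · obtain ⟨t, ht, rfl⟩ := mem_I_iff.1 hi
    have h1 := med_lt (L := L) (f := f) (idx_lt_S hk hj ht)
    have h2 : 2 * u L f ≤ (2 * Cc L + 2) * u L f := Nat.mul_le_mul_right _ (by omega)
    unfold a
    omega

lemma sum_pos {z : Multiset ℕ} (hL2 : ∀ k ∈ L, 2 ≤ k)
    (hz : ∀ x ∈ z, x ∈ Atoms L f) (hne : z ≠ 0) : u L f + 1 ≤ z.sum := by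
  obtain ⟨x, hx⟩ := Multiset.exists_mem_of_ne_zero hne
  obtain ⟨s, rfl⟩ := Multiset.exists_cons_of_mem hx
  rw [Multiset.sum_cons]
  have := Atoms_ge hL2 (hz x (Multiset.mem_cons_self _ _))
  omega

lemma Atoms_are_atoms (hL2 : ∀ k ∈ L, 2 ≤ k) {x : ℕ} (hx : x ∈ Atoms L f) :
    IsAtomOfN (H L f) x := by
  refine ⟨mem_H_of_Atoms hx, by have := Atoms_ge hL2 hx; omega, ?_⟩
  rintro v hv w hw hv0 hw0 rfl
  have hva : v ≤ a L f := by have := Atoms_le_a hL2 hx; omega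
  have hwa : w ≤ a L f := by have := Atoms_le_a hL2 hx; omega
  obtain ⟨zv, hzv, hzvs⟩ := mem_H_low hv hva
  obtain ⟨zw, hzw, hzws⟩ := mem_H_low hw hwa
  have hzvne : zv ≠ 0 := by rintro rfl; simp at hzvs; omega
  have hzwne : zw ≠ 0 := by rintro rfl; simp at hzws; omega
  apply no_sum_to_atom hL2 hx (z := zv + zw)
  · intro y hy
    rcases Multiset.mem_add.1 hy with h | h
    exacts [hzv y h, hzw y h]
  · have h1 : 1 ≤ Multiset.card zv := Multiset.card_pos.2 hzvne
    have h2 : 1 ≤ Multiset.card zw := Multiset.card_pos.2 hzwne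
    rw [Multiset.card_add]
    omega
  · rw [Multiset.sum_add, hzvs, hzws]

lemma atom_le_mem_Atoms (hL2 : ∀ k ∈ L, 2 ≤ k) {x : ℕ}
    (hx : IsAtomOfN (H L f) x) (hxa : x ≤ a L f) : x ∈ Atoms L f := by
  obtain ⟨hxH, hx0, hxs⟩ := hx
  obtain ⟨z, hz, hzs⟩ := mem_H_low hxH hxa
  have hzne : z ≠ 0 := by rintro rfl; simp at hzs; omega
  obtain ⟨y, hy⟩ := Multiset.exists_mem_of_ne_zero hzne
  obtain ⟨s, rfl⟩ := Multiset.exists_cons_of_mem hy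
  rcases Multiset.empty_or_exists_mem s with rfl | ⟨y', hy'⟩
  · have : x = y := by rw [← hzs]; simp
    rw [this]
    exact hz y (Multiset.mem_cons_self _ _)
  · exfalso
    have hsne : s ≠ 0 := by rintro rfl; simp at hy'
    apply hxs y (mem_H_of_Atoms (hz y (Multiset.mem_cons_self _ _)))
      s.sum (AddSubmonoid.multiset_sum_mem _ _ (fun t ht =>
        mem_H_of_Atoms (hz t (Multiset.mem_cons_of_mem ht))))
    · have := Atoms_ge hL2 (hz y (Multiset.mem_cons_self _ _))
      omega
    · have := sum_pos hL2 (fun t ht => hz t (Multiset.mem_cons_of_mem ht)) hsne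
      omega
    · rw [← hzs, Multiset.sum_cons]

lemma fact_iff (hL2 : ∀ k ∈ L, 2 ≤ k) {z : Multiset ℕ} :
    IsFactorizationOfN (H L f) (a L f) z ↔ (∀ x ∈ z, x ∈ Atoms L f) ∧ z.sum = a L f := by
  constructor
  · rintro ⟨h1, h2⟩
    refine ⟨fun x hx => ?_, h2⟩
    have hxa : x ≤ a L f := by
      have := Multiset.single_le_sum (fun y _ => Nat.zero_le y) x hx
      omega
    exact atom_le_mem_Atoms hL2 (h1 x hx) hxa
  · rintro ⟨h1, h2⟩
    exact ⟨fun x hx => Atoms_are_atoms hL2 (h1 x hx), h2⟩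

lemma med_inj {i i' : ℕ} (h : med L f i = med L f i') : i = i' := by
  unfold med at h
  have h2 : q L ^ i = q L ^ i' := by omega
  exact Nat.pow_right_injective (by have := q_ge (L := L); omega) h2

lemma Zs_inj {k j j' : ℕ} (hL2 : ∀ k ∈ L, 2 ≤ k) (hk : k ∈ L)
    (hj : j < f k) (hj' : j' < f k) (h : Zs L f k j = Zs L f k j') : j = j' := by
  have hk2 : 2 ≤ k := hL2 k hk
  have hmem : med L f (idx L f k j 0) ∈ Zs L f k j := by
    rw [Zs, Multiset.mem_cons]
    exact Or.inr (Multiset.mem_map_of_mem _ (mem_I_iff.2 ⟨0, by omega, rfl⟩))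
  rw [h, Zs, Multiset.mem_cons] at hmem
  rcases hmem with hmem | hmem
  · exfalso
    have := med_lt_V (idx_lt_S hk hj (by omega : (0:ℕ) < k - 1)) hk hk2 hj'
    omega
  · obtain ⟨i', hi', heq⟩ := Multiset.mem_map.1 hmem
    obtain ⟨t', ht', rfl⟩ := mem_I_iff.1 (by exact hi')
    have := med_inj heq.symm
    exact ((idx_inj hk hk hj hj' (by omega) ht' this).2.1)

lemma Zs_nodup {k j : ℕ} (hL2 : ∀ k ∈ L, 2 ≤ k) (hk : k ∈ L) (hj : j < f k) :
    (Zs L f k j).Nodup := by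
  have hk2 : 2 ≤ k := hL2 k hk
  rw [Zs, Multiset.nodup_cons]
  constructor
  · intro hmem
    obtain ⟨i, hi, heq⟩ := Multiset.mem_map.1 hmem
    obtain ⟨t, ht, rfl⟩ := mem_I_iff.1 (by exact hi)
    have := med_lt_V (idx_lt_S hk hj ht) hk hk2 hj
    omega
  · exact Multiset.Nodup.map (fun _ _ h => med_inj h) (I L f k j).nodup

end Derived
end Stmt8

open Stmt8

/-- For every finite nonempty set `L` of integers `≥ 2` and every map
`f : L → ℕ` with `f k ≥ 1` on `L`, there exist a numerical monoid `H` and a squarefree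
element `a ∈ H` whose set of lengths equals `L` and which has exactly `f k`
factorizations of length `k` for every `k ∈ L`. -/
theorem stmt8 (L : Finset ℕ) (hL : L.Nonempty) (hL2 : ∀ k ∈ L, 2 ≤ k)
    (f : ℕ → ℕ) (hf : ∀ k ∈ L, 1 ≤ f k) :
    ∃ H : AddSubmonoid ℕ, IsNumericalMonoid H ∧ ∃ a ∈ H,
      (¬ ∃ b ∈ H, ∃ c ∈ H, b ≠ 0 ∧ c ≠ 0 ∧ a = b + b + c) ∧
      ({n | ∃ z, IsFactorizationOfN H a z ∧ Multiset.card z = n} = ↑L) ∧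
      ∀ k ∈ L, {z | IsFactorizationOfN H a z ∧ Multiset.card z = k}.ncard = f k := by
  classical
  refine ⟨H L f, ?_, a L f, ?_, ?_, ?_, ?_⟩
  · -- numerical monoid
    apply Set.Finite.subset (Set.finite_Iio (a L f + 1))
    intro x hx
    simp only [Set.mem_compl_iff, SetLike.mem_coe] at hx
    by_contra hlt
    exact hx (mem_H_high (by simpa using hlt))
  · -- a ∈ H
    obtain ⟨k, hk⟩ := hL
    have hj : 0 < f k := hf k hk
    rw [← Zs_sum hk (hL2 k hk) hj]
    exact AddSubmonoid.multiset_sum_mem _ _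
      (fun x hx => mem_H_of_Atoms (Zs_mem_Atoms hk hj x hx))
  · -- squarefree
    rintro ⟨b, hb, c, hc, hb0, hc0, habc⟩
    have hba : b ≤ a L f := by omega
    have hca : c ≤ a L f := by omega
    obtain ⟨zb, hzb, hzbs⟩ := mem_H_low hb hba
    obtain ⟨zc, hzc, hzcs⟩ := mem_H_low hc hca
    have hzbne : zb ≠ 0 := by rintro rfl; simp at hzbs; omega
    have hall : ∀ x ∈ zb + zb + zc, x ∈ Atoms L f := by
      intro x hx
      rcases Multiset.mem_add.1 hx with hx | hx
      · rcases Multiset.mem_add.1 hx with hx | hx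
        exacts [hzb x hx, hzb x hx]
      · exact hzc x hx
    have hsum : (zb + zb + zc).sum = a L f := by
      rw [Multiset.sum_add, Multiset.sum_add, hzbs, hzcs]
      omega
    obtain ⟨k, hk, j, hj, heq⟩ := classify hL2 hall hsum
    obtain ⟨y, hy⟩ := Multiset.exists_mem_of_ne_zero hzbne
    have hcount : 2 ≤ (zb + zb + zc).count y := by
      rw [Multiset.count_add, Multiset.count_add]
      have := Multiset.one_le_count_iff_mem.2 hy
      omega
    rw [heq] at hcount
    have := Multiset.nodup_iff_count_le_one.1 (Zs_nodup hL2 hk hj) y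
    omega
  · -- set of lengths
    ext n
    simp only [Set.mem_setOf_eq, Finset.coe_sort_coe, Finset.mem_coe]
    constructor
    · rintro ⟨z, hfz, hcard⟩
      obtain ⟨h1, h2⟩ := (fact_iff hL2).1 hfz
      obtain ⟨k, hk, j, hj, rfl⟩ := classify hL2 h1 h2
      rw [Zs_card hk (hL2 k hk) hj] at hcard
      rwa [← hcard]
    · intro hn
      refine ⟨Zs L f n 0, (fact_iff hL2).2 ⟨Zs_mem_Atoms hn (hf n hn), Zs_sum hn (hL2 n hn) (hf n hn)⟩,
        Zs_card hn (hL2 n hn) (hf n hn)⟩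
  · -- counting
    intro k hk
    have hset : {z | IsFactorizationOfN (H L f) (a L f) z ∧ Multiset.card z = k}
        = ↑((Finset.range (f k)).image (fun j => Zs L f k j)) := by
      ext z
      simp only [Set.mem_setOf_eq, Finset.coe_image, Finset.coe_range, Set.mem_image,
        Set.mem_Iio]
      constructor
      · rintro ⟨hfz, hcard⟩
        obtain ⟨h1, h2⟩ := (fact_iff hL2).1 hfz
        obtain ⟨k', hk', j', hj', rfl⟩ := classify hL2 h1 h2
        have : k' = k := by rw [Zs_card hk' (hL2 k' hk') hj'] at hcard; omega
        subst this
        exact ⟨j', hj', rfl⟩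
      · rintro ⟨j, hj, rfl⟩
        exact ⟨(fact_iff hL2).2 ⟨Zs_mem_Atoms hk hj, Zs_sum hk (hL2 k hk) hj⟩,
          Zs_card hk (hL2 k hk) hj⟩
    rw [hset, Set.ncard_coe_finset, Finset.card_image_of_injOn, Finset.card_range]
    intro j hj j' hj' h
    simp only [Finset.coe_range, Set.mem_Iio] at hj hj'
    exact Zs_inj hL2 hk hj hj' h
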